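/- Let a < b be real numbers and let m_n([a,b]) denote the infimum of sup_{x ∈ [a,b]} |P(x)| over monic real polynomials P of degree n. Then lim_{n→∞} m_n([a,b])^{1/n} = (b−a)/4; that is, cap([a,b]) = (b−a)/4. -/

import Mathlib

open Polynomial Filter

/-- The sup norm of a real polynomial on a set `K ⊆ ℝ`. -/
noncomputable def supNormOn (K : Set ℝ) (P : Polynomial ℝ) : ℝ :=
  sSup ((fun x => |P.eval x|) '' K)

/-- `m_n(K)`: the infimum of sup norms on `K` of monic real polynomials of degree `n`. -/
noncomputable def chebInf (K : Set ℝ) (n : ℕ) : ℝ :=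
  sInf (supNormOn K '' {P : Polynomial ℝ | P.Monic ∧ P.natDegree = n})

section Aux
open Real


lemma T_deg_lc : ∀ n : ℕ, (Chebyshev.T ℝ ((n:ℤ)+1)).natDegree = n+1 ∧ (Chebyshev.T ℝ ((n:ℤ)+1)).leadingCoeff = 2^n := by
  intro n
  induction n using Nat.twoStepInduction with
  | zero => simp [Chebyshev.T_one]
  | one =>
    have h2 : Chebyshev.T ℝ (((1:ℕ):ℤ)+1) = 2*X^2-1 := by
      norm_num [Chebyshev.T_two]
    rw [h2]
    constructor
    · compute_degree!
    · rw [Polynomial.leadingCoeff]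
      have : (2*X^2-1 : ℝ[X]).natDegree = 2 := by compute_degree!
      rw [this]
      norm_num [Polynomial.coeff_sub, Polynomial.coeff_one, Polynomial.coeff_ofNat_mul, Polynomial.coeff_X_pow]
  | more n ih1 ih2 =>
    have key : Chebyshev.T ℝ (((n+2:ℕ):ℤ)+1) = 2 * X * Chebyshev.T ℝ (((n+1:ℕ):ℤ)+1) - Chebyshev.T ℝ (((n:ℕ):ℤ)+1) := by
      have := Chebyshev.T_add_two ℝ ((n:ℤ)+1)
      push_cast
      rw [show ((n:ℤ))+2+1 = ((n:ℤ))+1+2 by ring]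
      exact this
    obtain ⟨hd2, hl2⟩ := ih2
    obtain ⟨hd1, hl1⟩ := ih1
    have hA : Chebyshev.T ℝ (((n+1:ℕ):ℤ)+1) ≠ 0 := by
      intro h; rw [h] at hd2; simp at hd2
    have h2X : (2 * X : ℝ[X]) ≠ 0 := by
      intro h
      have := congrArg (fun p => Polynomial.coeff p 1) h
      simp at this
    have hd2X : (2 * X : ℝ[X]).natDegree = 1 := by compute_degree!
    have hl2X : (2 * X : ℝ[X]).leadingCoeff = 2 := by
      rw [Polynomial.leadingCoeff, hd2X]; simp
    have hdq : (2 * X * Chebyshev.T ℝ (((n+1:ℕ):ℤ)+1)).natDegree = n + 3 := by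
      rw [natDegree_mul h2X hA, hd2X, hd2]; ring
    have hlq : (2 * X * Chebyshev.T ℝ (((n+1:ℕ):ℤ)+1)).leadingCoeff = 2^(n+2) := by
      rw [leadingCoeff_mul, hl2X, hl2]; ring
    have hq0 : (2 * X * Chebyshev.T ℝ (((n+1:ℕ):ℤ)+1)) ≠ 0 := mul_ne_zero h2X hA
    have hdlt : (Chebyshev.T ℝ (((n:ℕ):ℤ)+1)).degree < (2 * X * Chebyshev.T ℝ (((n+1:ℕ):ℤ)+1)).degree := by
      apply Polynomial.degree_lt_degree
      rw [hdq, hd1]; omega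
    rw [key]
    refine ⟨?_, ?_⟩
    · rw [natDegree_sub_eq_left_of_natDegree_lt, hdq]
      rw [hdq, hd1]; omega
    · rw [leadingCoeff_sub_of_degree_lt hdlt, hlq]


section Q
variable (a b : ℝ)

/-- rescaled Chebyshev polynomial, monic on [a,b] -/
noncomputable def chebQ (n : ℕ) : ℝ[X] :=
  C (2 * ((b-a)/4)^n) * ((Polynomial.Chebyshev.T ℝ n).comp (C (2/(b-a)) * X - C ((a+b)/(b-a))))

/-- Chebyshev nodes on [a,b] -/
noncomputable def chebNode (n k : ℕ) : ℝ :=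
  (a+b)/2 + (b-a)/2 * Real.cos (k * π / n)

variable {a b} (hab : a < b)
include hab

lemma chebQ_eval (n : ℕ) (x : ℝ) :
    (chebQ a b n).eval x
      = 2 * ((b-a)/4)^n * (Polynomial.Chebyshev.T ℝ n).eval ((2*x - (a+b))/(b-a)) := by
  have h : (b - a) ≠ 0 := sub_ne_zero.2 hab.ne'
  simp only [chebQ, eval_mul, eval_C, eval_comp, eval_sub, eval_add, eval_X]
  congr 2
  field_simp

lemma chebQ_eval_cos (n : ℕ) (θ : ℝ) :
    (chebQ a b n).eval ((a+b)/2 + (b-a)/2 * Real.cos θ)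
      = 2 * ((b-a)/4)^n * Real.cos (n * θ) := by
  have h : (b - a) ≠ 0 := sub_ne_zero.2 hab.ne'
  rw [chebQ_eval hab]
  have : (2*((a+b)/2 + (b-a)/2 * Real.cos θ) - (a+b))/(b-a) = Real.cos θ := by
    field_simp
    ring
  rw [this, Polynomial.Chebyshev.T_real_cos]
  push_cast
  norm_num

lemma chebQ_abs_le (n : ℕ) {x : ℝ} (hx : x ∈ Set.Icc a b) :
    |(chebQ a b n).eval x| ≤ 2 * ((b-a)/4)^n := by
  have h : (0:ℝ) < b - a := sub_pos.2 hab
  set y : ℝ := (2*x - (a+b))/(b-a) with hy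
  have hy1 : -1 ≤ y := by
    rw [hy, le_div_iff₀ h]
    nlinarith [hx.1]
  have hy2 : y ≤ 1 := by
    rw [hy, div_le_iff₀ h]
    nlinarith [hx.2]
  rw [chebQ_eval hab, ← hy, ← Real.cos_arccos hy1 hy2, Polynomial.Chebyshev.T_real_cos]
  rw [abs_mul]
  have h1 : |(2:ℝ) * ((b-a)/4)^n| = 2 * ((b-a)/4)^n := by
    rw [abs_of_nonneg]; positivity
  rw [h1]
  exact mul_le_of_le_one_right (by positivity) (Real.abs_cos_le_one _)

lemma chebQ_monic (n : ℕ) (hn : 1 ≤ n) : (chebQ a b n).Monic ∧ (chebQ a b n).natDegree = n := by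
  have h : (0:ℝ) < b - a := sub_pos.2 hab
  obtain ⟨m, rfl⟩ : ∃ m, n = m + 1 := ⟨n - 1, by omega⟩
  obtain ⟨hd, hl⟩ := T_deg_lc m
  have hL : (C (2/(b-a)) * X - C ((a+b)/(b-a)) : ℝ[X]).natDegree = 1 := by
    compute_degree!
    positivity
  have hLl : (C (2/(b-a)) * X - C ((a+b)/(b-a)) : ℝ[X]).leadingCoeff = 2/(b-a) := by
    rw [Polynomial.leadingCoeff, hL]
    simp [coeff_sub, coeff_C_mul]
  have hTmk : Polynomial.Chebyshev.T ℝ ((m+1:ℕ):ℤ) = Polynomial.Chebyshev.T ℝ ((m:ℤ)+1) := by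
    push_cast; rfl
  have hdQ : (chebQ a b (m+1)).natDegree = m+1 := by
    rw [chebQ, natDegree_C_mul (by positivity), natDegree_comp, hL, hTmk, hd, mul_one]
  have hlQ : (chebQ a b (m+1)).leadingCoeff = 1 := by
    rw [chebQ, leadingCoeff_mul, leadingCoeff_C, leadingCoeff_comp (by rw [hL]; norm_num),
      hLl, hTmk, hl, hd]
    have hba : (b-a) ≠ 0 := by positivity
    field_simp
    have e : (b-a)/4 * (2/(b-a)) = 1/2 := by
      rw [div_mul_div_comm, div_eq_iff (by positivity)]; ring
    calc 2 * ((b - a) / 4) ^ (m + 1) * 2 ^ m * (2 / (b - a)) ^ (m + 1)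
        = 2^(m+1) * ((b-a)/4 * (2/(b-a)))^(m+1) := by rw [mul_pow]; ring
    _ = 1 := by rw [e, ← mul_pow]; norm_num
  exact ⟨hlQ, hdQ⟩

lemma chebNode_mem (n k : ℕ) : chebNode a b n k ∈ Set.Icc a b := by
  have h : (0:ℝ) < b - a := sub_pos.2 hab
  have h1 := Real.neg_one_le_cos (k * π / n)
  have h2 := Real.cos_le_one (k * π / n)
  constructor <;> (rw [chebNode]; nlinarith)

lemma chebNode_strictAnti (n : ℕ) (hn : 1 ≤ n) {k l : ℕ} (hk : k < l) (hl : l ≤ n) :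
    chebNode a b n l < chebNode a b n k := by
  have h : (0:ℝ) < b - a := sub_pos.2 hab
  have hn' : (0:ℝ) < n := by positivity
  have hcos : Real.cos (l * π / n) < Real.cos (k * π / n) := by
    apply Real.strictAntiOn_cos
    · constructor
      · positivity
      · rw [div_le_iff₀ hn']
        have : (k:ℝ) ≤ n := by exact_mod_cast hk.le.trans hl
        nlinarith [Real.pi_pos]
    · constructor
      · positivity
      · rw [div_le_iff₀ hn']
        have : (l:ℝ) ≤ n := by exact_mod_cast hl
        nlinarith [Real.pi_pos]
    · have hkl : (k:ℝ) < l := by exact_mod_cast hk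
      have hpi := Real.pi_pos
      apply (div_lt_div_iff_of_pos_right hn').2
      nlinarith
  rw [chebNode, chebNode]
  nlinarith

lemma chebQ_node (n : ℕ) (hn : 1 ≤ n) (k : ℕ) :
    (chebQ a b n).eval (chebNode a b n k) = 2 * ((b-a)/4)^n * (-1)^k := by
  have hn' : (n:ℝ) ≠ 0 := by positivity
  rw [chebNode, chebQ_eval_cos hab]
  congr 1
  have : (n:ℝ) * ((k:ℝ) * π / n) = k * π := by field_simp
  rw [this]
  have := Real.cos_nat_mul_pi_sub 0 k
  simpa using this

end Q

section Main
variable {a b : ℝ} (hab : a < b)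
include hab

omit hab in
lemma bddAbove_absEval (P : ℝ[X]) : BddAbove ((fun x => |P.eval x|) '' Set.Icc a b) :=
  (isCompact_Icc.image ((Polynomial.continuous P).abs)).bddAbove

omit hab in
lemma le_supNormOn (P : ℝ[X]) {x : ℝ} (hx : x ∈ Set.Icc a b) :
    |P.eval x| ≤ supNormOn (Set.Icc a b) P :=
  le_csSup (bddAbove_absEval P) ⟨x, hx, rfl⟩

lemma supNormOn_le (P : ℝ[X]) {c : ℝ} (hc : ∀ x ∈ Set.Icc a b, |P.eval x| ≤ c) :
    supNormOn (Set.Icc a b) P ≤ c := by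
  apply csSup_le
  · exact ⟨|P.eval a|, ⟨a, Set.mem_Icc.2 ⟨le_refl a, hab.le⟩, rfl⟩⟩
  · rintro y ⟨x, hx, rfl⟩; exact hc x hx

lemma supNormOn_nonneg (P : ℝ[X]) : 0 ≤ supNormOn (Set.Icc a b) P :=
  le_trans (abs_nonneg _) (le_supNormOn P (Set.mem_Icc.2 ⟨le_refl a, hab.le⟩))

lemma cheb_lower {n : ℕ} (hn : 1 ≤ n) (P : ℝ[X]) (hP : P.Monic) (hPd : P.natDegree = n) :
    2 * ((b-a)/4)^n ≤ supNormOn (Set.Icc a b) P := by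
  by_contra hlt
  push_neg at hlt
  set S := supNormOn (Set.Icc a b) P with hS
  set r := (b-a)/4 with hr
  have hr0 : 0 < r := by rw [hr]; linarith
  obtain ⟨hQm, hQd⟩ := chebQ_monic hab n hn
  set Q := chebQ a b n with hQ
  set D := Q - P with hD
  have hdD : D.natDegree < n := by
    by_cases h0 : D = 0
    · rw [h0]; simp; omega
    · have hdeg : D.degree < Q.degree := by
        apply degree_sub_lt ?_ hQm.ne_zero ?_
        · rw [degree_eq_natDegree hQm.ne_zero, degree_eq_natDegree hP.ne_zero, hQd, hPd]
        · rw [hQm.leadingCoeff, hP.leadingCoeff]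
      have := natDegree_lt_natDegree h0 hdeg
      rwa [hQd] at this
  have hval : ∀ k : ℕ, (-1:ℝ)^k * D.eval (chebNode a b n k) > 0 := by
    intro k
    have h1 : Q.eval (chebNode a b n k) = 2*r^n*(-1)^k := chebQ_node hab n hn k
    have h2 : |P.eval (chebNode a b n k)| ≤ S := le_supNormOn P (chebNode_mem hab n k)
    have h3 : (-1:ℝ)^k * P.eval (chebNode a b n k) ≤ S := by
      rcases Nat.even_or_odd k with he | ho
      · rw [he.neg_one_pow, one_mul]; exact le_trans (le_abs_self _) h2
      · rw [ho.neg_one_pow]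
        calc -1 * P.eval (chebNode a b n k) = -(P.eval (chebNode a b n k)) := by ring
        _ ≤ |P.eval (chebNode a b n k)| := neg_le_abs _
        _ ≤ S := h2
    have hsq : (-1:ℝ)^k * ((-1:ℝ)^k) = 1 := by
      rcases Nat.even_or_odd k with he | ho
      · rw [he.neg_one_pow]; norm_num
      · rw [ho.neg_one_pow]; norm_num
    have key : (-1:ℝ)^k * D.eval (chebNode a b n k)
        = 2*r^n - (-1:ℝ)^k * P.eval (chebNode a b n k) := by
      rw [hD, eval_sub, h1]
      linear_combination (2*r^n) * hsq
    rw [key]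
    linarith
  have hroot : ∀ k : ℕ, k < n →
      ∃ c ∈ Set.Ioo (chebNode a b n (k+1)) (chebNode a b n k), D.eval c = 0 := by
    intro k hk
    have hlt' : chebNode a b n (k+1) < chebNode a b n k :=
      chebNode_strictAnti hab n hn (lt_add_one k) hk
    have hcont : ContinuousOn (fun x => D.eval x)
        (Set.Icc (chebNode a b n (k+1)) (chebNode a b n k)) :=
      (Polynomial.continuous D).continuousOn
    rcases Nat.even_or_odd k with he | ho
    · have hA : 0 < D.eval (chebNode a b n k) := by
        have := hval k; rw [he.neg_one_pow, one_mul] at this; exact this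
      have hB : D.eval (chebNode a b n (k+1)) < 0 := by
        have := hval (k+1)
        rw [(he.add_one).neg_one_pow] at this; linarith
      obtain ⟨c, hc, hc0⟩ := intermediate_value_Ioo hlt'.le hcont (Set.mem_Ioo.2 ⟨hB, hA⟩)
      exact ⟨c, hc, hc0⟩
    · have hA : D.eval (chebNode a b n k) < 0 := by
        have := hval k; rw [ho.neg_one_pow] at this; linarith
      have hB : 0 < D.eval (chebNode a b n (k+1)) := by
        have := hval (k+1)
        have : ((-1:ℝ))^(k+1) * D.eval (chebNode a b n (k+1)) > 0 := hval (k+1)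
        rw [Even.neg_one_pow (by exact ho.add_one), one_mul] at this; exact this
      obtain ⟨c, hc, hc0⟩ := intermediate_value_Ioo' hlt'.le hcont (Set.mem_Ioo.2 ⟨hA, hB⟩)
      exact ⟨c, hc, hc0⟩
  choose! c hc hc0 using hroot
  have hanti : ∀ k l : ℕ, l < n → k < l → c l < c k := by
    intro k l hl hkl
    have hkn : k < n := hkl.trans hl
    have h1 := hc k hkn
    have h2 := hc l hl
    have h3 : chebNode a b n l ≤ chebNode a b n (k+1) := by
      rcases eq_or_lt_of_le (show k+1 ≤ l by omega) with heq | hlt'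
      · rw [← heq]
      · exact (chebNode_strictAnti hab n hn hlt' hl.le).le
    calc c l < chebNode a b n l := h2.2
    _ ≤ chebNode a b n (k+1) := h3
    _ < c k := h1.1
  have hinj : Function.Injective (fun k : Fin n => c k) := by
    intro k l hkl
    by_contra hne
    rcases lt_or_gt_of_ne (fun h => hne (Fin.ext h)) with h | h
    · exact absurd hkl.symm (ne_of_lt (hanti k l l.2 h))
    · exact absurd hkl (ne_of_lt (hanti l k k.2 h))
  have hD0 : D = 0 := by
    apply Polynomial.eq_zero_of_natDegree_lt_card_of_eval_eq_zero D hinj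
    · intro i; exact hc0 i i.2
    · simpa using hdD
  have hPQ : P = Q := by
    have := sub_eq_zero.1 hD0; exact this.symm
  have h0n : chebNode a b n 0 ∈ Set.Icc a b := chebNode_mem hab n 0
  have : |P.eval (chebNode a b n 0)| ≤ S := le_supNormOn P h0n
  rw [hPQ, chebQ_node hab n hn 0] at this
  have habs : |2*r^n*(-1:ℝ)^0| = 2*r^n := by
    rw [pow_zero, mul_one, abs_of_nonneg (by positivity)]
  rw [habs] at this
  linarith

lemma chebInf_eq {n : ℕ} (hn : 1 ≤ n) :
    chebInf (Set.Icc a b) n = 2 * ((b-a)/4)^n := by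
  obtain ⟨hQm, hQd⟩ := chebQ_monic hab n hn
  apply le_antisymm
  · apply csInf_le
    · exact ⟨0, by rintro y ⟨P, hP, rfl⟩; exact supNormOn_nonneg hab P⟩
    · refine ⟨chebQ a b n, ⟨hQm, hQd⟩, ?_⟩
      exact le_antisymm (supNormOn_le hab _ (fun x hx => chebQ_abs_le hab n hx))
        (cheb_lower hab hn _ hQm hQd)
  · apply le_csInf
    · exact ⟨supNormOn (Set.Icc a b) (chebQ a b n), ⟨chebQ a b n, ⟨hQm, hQd⟩, rfl⟩⟩
    · rintro y ⟨P, ⟨hPm, hPd⟩, rfl⟩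
      exact cheb_lower hab hn P hPm hPd

end Main

end Aux

open Real in
/-- `cap([a,b]) = (b-a)/4`: the capacity of an interval. -/
theorem cap_Icc (a b : ℝ) (hab : a < b) :
    Tendsto (fun n : ℕ => chebInf (Set.Icc a b) n ^ ((n : ℝ)⁻¹)) atTop
      (nhds ((b - a) / 4)) := by
  set r := (b-a)/4 with hr
  have hr0 : 0 < r := by rw [hr]; linarith
  have heq : ∀ᶠ n : ℕ in atTop,
      (2:ℝ) ^ ((n:ℝ)⁻¹) * r = chebInf (Set.Icc a b) n ^ ((n:ℝ)⁻¹) := by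
    filter_upwards [eventually_ge_atTop 1] with n hn
    have hn' : (n:ℝ) ≠ 0 := Nat.cast_ne_zero.2 (by omega)
    rw [chebInf_eq hab hn, Real.mul_rpow (by norm_num) (by positivity)]
    congr 1
    rw [← Real.rpow_natCast r n, ← Real.rpow_mul hr0.le, mul_inv_cancel₀ hn', Real.rpow_one]
  have h2 : Tendsto (fun n : ℕ => (2:ℝ) ^ ((n:ℝ)⁻¹)) atTop (nhds 1) := by
    have h0 : Tendsto (fun n : ℕ => ((n:ℝ))⁻¹) atTop (nhds 0) :=
      tendsto_inv_atTop_nhds_zero_nat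
    have := (Real.continuousAt_const_rpow (b := 0) (by norm_num : (2:ℝ) ≠ 0)).tendsto.comp h0
    simpa [Function.comp_def] using this
  have hmul := h2.mul_const r
  rw [one_mul] at hmul
  exact Tendsto.congr' heq hmul
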